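/- Let 𝔤 be a finite-dimensional real Lie algebra with trivial centre such that the ideal 𝔤^∞ := ⋂_{j≥1} 𝔤^j is abelian, and let 𝔠 := { x ∈ 𝔤 : [x, y] = 0 for all y ∈ 𝔤^∞ } be the centralizer of 𝔤^∞ in 𝔤. Then there exists a nilpotent Lie subalgebra 𝔨 ⊆ 𝔤 with 𝔨 + 𝔤^∞ = 𝔤 and 𝔠 = (𝔠 ∩ 𝔨) + (𝔠 ∩ 𝔤^∞). -/

import Mathlib

open LieModule LieAlgebra

/-- Let `𝔤` be a finite-dimensional real Lie algebra with trivial centre whose ideal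
`𝔤^∞ := ⋂_{j≥1} 𝔤^j` is abelian, and let `𝔠` be the centralizer of `𝔤^∞` in `𝔤`.
Then there is a nilpotent subalgebra `𝔨 ⊆ 𝔤` with `𝔨 + 𝔤^∞ = 𝔤` and
`𝔠 = (𝔠 ∩ 𝔨) + (𝔠 ∩ 𝔤^∞)`. -/
theorem stmt6 (L : Type*) [LieRing L] [LieAlgebra ℝ L] [Module.Finite ℝ L]
    (hcenter : LieAlgebra.center ℝ L = ⊥)
    (habelian : ∀ x ∈ (⨅ k, LieModule.lowerCentralSeries ℝ L L k),
      ∀ y ∈ (⨅ k, LieModule.lowerCentralSeries ℝ L L k), ⁅x, y⁆ = 0) :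
    ∃ K : LieSubalgebra ℝ L, LieRing.IsNilpotent K ∧
      (∀ x : L, ∃ a ∈ K, ∃ b ∈ (⨅ k, LieModule.lowerCentralSeries ℝ L L k), x = a + b) ∧
      (∀ x : L, (∀ y ∈ (⨅ k, LieModule.lowerCentralSeries ℝ L L k), ⁅x, y⁆ = 0) →
        ∃ a, ((∀ y ∈ (⨅ k, LieModule.lowerCentralSeries ℝ L L k), ⁅a, y⁆ = 0) ∧ a ∈ K) ∧
        ∃ b, ((∀ y ∈ (⨅ k, LieModule.lowerCentralSeries ℝ L L k), ⁅b, y⁆ = 0) ∧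
          b ∈ (⨅ k, LieModule.lowerCentralSeries ℝ L L k)) ∧ x = a + b) := by
  classical
  obtain ⟨x₀, hx₀⟩ := LieAlgebra.exists_isCartanSubalgebra_engel ℝ L
  set H : LieSubalgebra ℝ L := LieSubalgebra.engel ℝ x₀ with hH
  haveI : H.IsCartanSubalgebra := hx₀
  haveI : IsNoetherian ℝ L := inferInstance
  haveI : IsArtinian ℝ L := inferInstance
  -- every element of the positive Fitting component lies in g^∞
  have key : ∀ (x : H) (m : L), m ∈ posFittingCompOf ℝ L x →
      m ∈ (⨅ k, LieModule.lowerCentralSeries ℝ L L k) := by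
    intro x m hm
    rw [LieSubmodule.mem_iInf]
    intro k
    obtain ⟨n, hn⟩ := (mem_posFittingCompOf ℝ x m).mp hm k
    have h : ∀ (j : ℕ) (n : L), (toEnd ℝ H L x ^ j) n ∈ LieModule.lowerCentralSeries ℝ L L j := by
      intro j
      induction j with
      | zero => intro n; simp
      | succ j ih =>
        intro n
        rw [pow_succ']
        have he : (toEnd ℝ H L x * toEnd ℝ H L x ^ j) n
            = ⁅(x : L), (toEnd ℝ H L x ^ j) n⁆ := rfl
        rw [he, LieModule.lowerCentralSeries_succ]
        exact LieSubmodule.lie_mem_lie (LieSubmodule.mem_top _) (ih n)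
    exact hn ▸ h k n
  have hfit : ∀ m : L, m ∈ posFittingComp ℝ H L →
      m ∈ (⨅ k, LieModule.lowerCentralSeries ℝ L L k) := by
    intro m hm
    have hle : ((posFittingComp ℝ H L : LieSubmodule ℝ H L) : Submodule ℝ L) ≤
        ((⨅ k, LieModule.lowerCentralSeries ℝ L L k : LieSubmodule ℝ L L) : Submodule ℝ L) := by
      rw [posFittingComp, LieSubmodule.iSup_toSubmodule]
      exact iSup_le fun x => fun n hn => key x n hn
    exact hle hm
  -- the decomposition
  have hdecomp : ∀ x : L, ∃ a ∈ H, ∃ b ∈ (⨅ k, LieModule.lowerCentralSeries ℝ L L k), x = a + b := by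
    intro x
    have hsup := (LieModule.isCompl_genWeightSpace_zero_posFittingComp ℝ H L).codisjoint
    rw [codisjoint_iff] at hsup
    have hx : x ∈ genWeightSpace L (0 : H → ℝ) ⊔ posFittingComp ℝ H L := hsup ▸
      LieSubmodule.mem_top x
    rw [LieSubmodule.mem_sup] at hx
    obtain ⟨a, ha, b, hb, hab⟩ := hx
    refine ⟨a, ?_, b, hfit b hb, hab.symm⟩
    have hzr := LieAlgebra.zeroRootSubalgebra_eq_of_is_cartan ℝ L H
    rw [← hzr]
    exact ha
  refine ⟨H, inferInstance, hdecomp, ?_⟩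
  intro x hx
  obtain ⟨a, ha, b, hb, rfl⟩ := hdecomp x
  refine ⟨a, ⟨fun y hy => ?_, ha⟩, b, ⟨fun y hy => habelian b hb y hy, hb⟩, rfl⟩
  have : ⁅a + b, y⁆ = 0 := hx y hy
  have hby : ⁅b, y⁆ = 0 := habelian b hb y hy
  rw [add_lie, hby, add_zero] at this
  exact this
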